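/- If real numbers α₁, β₁ satisfy sin(2β₁)·cos(2α₁) = 0 and sin(2(α₁ − β₁)) = 0, and additionally both α₁ and β₁ lie in [0, 2π), then either both α₁ and β₁ lie in the set {π/4, 3π/4, 5π/4, 7π/4}, or both lie in the set {0, π/2, π, 3π/2}. -/
import Mathlib


open Real

lemma memOdd (x : ℝ) (n : ℤ) (hx : x = (2*(n:ℝ)+1) * (π/4)) (h0 : 0 ≤ x) (h2 : x < 2*π) :
    x ∈ ({π/4, 3*π/4, 5*π/4, 7*π/4} : Set ℝ) := by
  have hπ := Real.pi_pos
  have hlo : (-1:ℝ) < (n:ℝ) := by nlinarith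
  have hhi : (n:ℝ) < 4 := by nlinarith
  have hlo' : (0:ℤ) ≤ n := by
    have : (-1:ℤ) < n := by exact_mod_cast hlo
    omega
  have hhi' : n ≤ 3 := by
    have : n < 4 := by exact_mod_cast hhi
    omega
  interval_cases n <;> simp only [hx, Set.mem_insert_iff, Set.mem_singleton_iff] <;> push_cast <;> norm_num <;> ring_nf <;> tauto

lemma memEven (x : ℝ) (n : ℤ) (hx : x = (n:ℝ) * (π/2)) (h0 : 0 ≤ x) (h2 : x < 2*π) :
    x ∈ ({0, π/2, π, 3*π/2} : Set ℝ) := by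
  have hπ := Real.pi_pos
  have hlo : (-1:ℝ) < (n:ℝ) := by nlinarith
  have hhi : (n:ℝ) < 4 := by nlinarith
  have hlo' : (0:ℤ) ≤ n := by
    have : (-1:ℤ) < n := by exact_mod_cast hlo
    omega
  have hhi' : n ≤ 3 := by
    have : n < 4 := by exact_mod_cast hhi
    omega
  interval_cases n <;> simp only [hx, Set.mem_insert_iff, Set.mem_singleton_iff] <;> push_cast <;> norm_num <;> ring_nf <;> tauto

theorem stmt_7 (α₁ β₁ : ℝ)
    (h1 : Real.sin (2*β₁) * Real.cos (2*α₁) = 0)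
    (h2 : Real.sin (2*(α₁ - β₁)) = 0)
    (hα : α₁ ∈ Set.Ico 0 (2*π)) (hβ : β₁ ∈ Set.Ico 0 (2*π)) :
    (α₁ ∈ ({π/4, 3*π/4, 5*π/4, 7*π/4} : Set ℝ) ∧
     β₁ ∈ ({π/4, 3*π/4, 5*π/4, 7*π/4} : Set ℝ)) ∨
    (α₁ ∈ ({0, π/2, π, 3*π/2} : Set ℝ) ∧
     β₁ ∈ ({0, π/2, π, 3*π/2} : Set ℝ)) := by
  obtain ⟨hα0, hα2⟩ := hα
  obtain ⟨hβ0, hβ2⟩ := hβ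
  rw [Real.sin_eq_zero_iff] at h2
  obtain ⟨k, hk⟩ := h2
  rcases mul_eq_zero.mp h1 with hs | hc
  · rw [Real.sin_eq_zero_iff] at hs
    obtain ⟨n, hn⟩ := hs
    right
    have hβeq : β₁ = (n:ℝ) * (π/2) := by linarith
    have hαeq : α₁ = ((n + k : ℤ):ℝ) * (π/2) := by push_cast; linarith
    exact ⟨memEven α₁ (n+k) hαeq hα0 hα2, memEven β₁ n hβeq hβ0 hβ2⟩
  · rw [Real.cos_eq_zero_iff] at hc
    obtain ⟨n, hn⟩ := hc
    left
    have hαeq : α₁ = (2*(n:ℝ)+1) * (π/4) := by linarith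
    have hβeq : β₁ = (2*((n - k : ℤ):ℝ)+1) * (π/4) := by push_cast; linarith
    exact ⟨memOdd α₁ n hαeq hα0 hα2, memOdd β₁ (n-k) hβeq hβ0 hβ2⟩
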